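/- Fix α > 1, σ > 0, a > 0 and a real θ, and define Δ(u) = Φ((a−u)/σ) − Φ((−a−u)/σ). Then the function F(x) = α·x²/(2σ²) + log( Δ(θ+x)/Δ(θ) ) + (1/(α−1)) · log( Δ(θ+(1−α)x)/Δ(θ) ), which equals the Rényi divergence of order α between the truncated Gaussians N^T(θ, σ², [−a,a]) and N^T(θ+x, σ², [−a,a]), is monotonically increasing in x on [0, ∞). -/

import Mathlib

open MeasureTheory Real Filter

/-- Standard Gaussian density. -/
noncomputable def phi (x : ℝ) : ℝ := (Real.sqrt (2 * Real.pi))⁻¹ * Real.exp (-(x ^ 2) / 2)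

/-- Standard Gaussian cumulative distribution function. -/
noncomputable def Phi (x : ℝ) : ℝ := ∫ t in Set.Iic x, phi t

/-- Mass of the Gaussian `N(u, σ²)` on `[−a, a]`. -/
noncomputable def Δ (a σ u : ℝ) : ℝ := Phi ((a - u) / σ) - Phi ((-a - u) / σ)

noncomputable def Mfun (a σ t : ℝ) : ℝ := ∫ x in (-a)..a, Real.exp (t * x - x ^ 2 / (2 * σ ^ 2))

lemma integrable_phi : Integrable phi := by
  have h := (integrable_exp_neg_mul_sq (by norm_num : (0:ℝ) < 1/2)).const_mul
      (Real.sqrt (2 * Real.pi))⁻¹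
  refine h.congr (Eventually.of_forall fun x => ?_)
  unfold phi
  ring_nf

lemma Phi_sub_Phi (l r : ℝ) : Phi r - Phi l = ∫ x in l..r, phi x :=
  intervalIntegral.integral_Iic_sub_Iic integrable_phi.integrableOn integrable_phi.integrableOn

lemma Δ_eq {a σ : ℝ} (hσ : 0 < σ) (u : ℝ) :
    Δ a σ u = (σ * Real.sqrt (2 * Real.pi))⁻¹ * Real.exp (-(u ^ 2) / (2 * σ ^ 2))
      * Mfun a σ (u / σ ^ 2) := by
  have h1 : Δ a σ u = ∫ x in ((-a - u) / σ)..((a - u) / σ), phi x := by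
    rw [Δ, Phi_sub_Phi]
  have h2 : (∫ y in (-a)..a, phi ((y - u) / σ))
      = σ • ∫ x in ((-a - u) / σ)..((a - u) / σ), phi x := by
    rw [intervalIntegral.integral_comp_sub_right (fun z => phi (z / σ)) u,
      intervalIntegral.integral_comp_div (fun x => phi x) hσ.ne']
  have h3 : Δ a σ u = σ⁻¹ * ∫ y in (-a)..a, phi ((y - u) / σ) := by
    rw [h2, h1, smul_eq_mul]; field_simp
  rw [h3, ← intervalIntegral.integral_const_mul, Mfun, ← intervalIntegral.integral_const_mul]
  refine intervalIntegral.integral_congr fun y _ => ?_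
  unfold phi
  rw [mul_assoc ((σ * Real.sqrt (2 * Real.pi))⁻¹), ← Real.exp_add, mul_inv, ← mul_assoc]
  congr 1
  field_simp
  ring

lemma contM {σ t : ℝ} : Continuous fun x : ℝ => Real.exp (t * x - x ^ 2 / (2 * σ ^ 2)) := by
  fun_prop

lemma Mpos {a σ : ℝ} (ha : 0 < a) (t : ℝ) : 0 < Mfun a σ t := by
  refine intervalIntegral.intervalIntegral_pos_of_pos
    (contM.intervalIntegrable _ _) (fun x => Real.exp_pos _) (by linarith)

lemma Mholder {a σ : ℝ} (ha : 0 < a) (hσ : 0 < σ) {t₁ t₂ c d : ℝ}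
    (hc : 0 < c) (hd : 0 < d) (hcd : c + d = 1) :
    Mfun a σ (c * t₁ + d * t₂) ≤ Mfun a σ t₁ ^ c * Mfun a σ t₂ ^ d := by
  have hle : (-a : ℝ) ≤ a := by linarith
  have e : Real.HolderConjugate (1 / c) (1 / d) := Real.holderConjugate_one_div hc hd hcd
  set μ := volume.restrict (Set.Ioc (-a) a) with hμ
  haveI : IsFiniteMeasure μ := ⟨by
    rw [hμ, Measure.restrict_apply_univ]; exact measure_Ioc_lt_top⟩
  set f : ℝ → ℝ := fun x => Real.exp (c * (t₁ * x - x ^ 2 / (2 * σ ^ 2))) with hf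
  set g : ℝ → ℝ := fun x => Real.exp (d * (t₂ * x - x ^ 2 / (2 * σ ^ 2))) with hg
  have hbound : ∀ (s e' : ℝ), 0 < e' → ∀ᵐ x ∂μ,
      ‖Real.exp (e' * (s * x - x ^ 2 / (2 * σ ^ 2)))‖ ≤ Real.exp (e' * (|s| * a)) := by
    intro s e' he'
    rw [hμ, ae_restrict_iff' measurableSet_Ioc]
    refine Eventually.of_forall fun x hx => ?_
    rw [Real.norm_eq_abs, Real.abs_exp]
    refine Real.exp_le_exp.mpr (mul_le_mul_of_nonneg_left ?_ he'.le)
    have h1 : s * x ≤ |s| * a := by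
      calc s * x ≤ |s * x| := le_abs_self _
      _ = |s| * |x| := abs_mul _ _
      _ ≤ |s| * a := by
          refine mul_le_mul_of_nonneg_left ?_ (abs_nonneg _)
          rw [abs_le]; exact ⟨by linarith [hx.1], hx.2⟩
    have h2 : 0 ≤ x ^ 2 / (2 * σ ^ 2) := by positivity
    linarith
  have hfL : MemLp f (ENNReal.ofReal (1 / c)) μ :=
    MemLp.of_bound (Continuous.aestronglyMeasurable (by fun_prop)) _ (hbound t₁ c hc)
  have hgL : MemLp g (ENNReal.ofReal (1 / d)) μ :=
    MemLp.of_bound (Continuous.aestronglyMeasurable (by fun_prop)) _ (hbound t₂ d hd)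
  have hfnn : 0 ≤ᵐ[μ] f := Eventually.of_forall fun x => (Real.exp_pos _).le
  have hgnn : 0 ≤ᵐ[μ] g := Eventually.of_forall fun x => (Real.exp_pos _).le
  have H := MeasureTheory.integral_mul_le_Lp_mul_Lq_of_nonneg e hfnn hgnn hfL hgL
  have hM : ∀ t : ℝ, Mfun a σ t = ∫ x, Real.exp (t * x - x ^ 2 / (2 * σ ^ 2)) ∂μ := by
    intro t; rw [Mfun, intervalIntegral.integral_of_le hle, hμ]
  have e1 : ∫ x, f x * g x ∂μ = Mfun a σ (c * t₁ + d * t₂) := by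
    rw [hM]
    refine integral_congr_ae (Eventually.of_forall fun x => ?_)
    rw [hf, hg]; dsimp only
    rw [← Real.exp_add]
    congr 1
    have : c * (x ^ 2 / (2 * σ ^ 2)) + d * (x ^ 2 / (2 * σ ^ 2)) = x ^ 2 / (2 * σ ^ 2) := by
      rw [← add_mul, hcd, one_mul]
    nlinarith [this]
  have e2 : ∫ x, f x ^ (1 / c) ∂μ = Mfun a σ t₁ := by
    rw [hM]
    refine integral_congr_ae (Eventually.of_forall fun x => ?_)
    rw [hf]; dsimp only
    rw [← Real.exp_mul]
    congr 1
    field_simp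
  have e3 : ∫ x, g x ^ (1 / d) ∂μ = Mfun a σ t₂ := by
    rw [hM]
    refine integral_congr_ae (Eventually.of_forall fun x => ?_)
    rw [hg]; dsimp only
    rw [← Real.exp_mul]
    congr 1
    field_simp
  rw [e1, e2, e3] at H
  simpa [one_div_one_div] using H

lemma Δpos {a σ : ℝ} (ha : 0 < a) (hσ : 0 < σ) (u : ℝ) : 0 < Δ a σ u := by
  rw [Δ_eq hσ u]
  have := Mpos (σ := σ) ha (u / σ ^ 2)
  positivity

lemma hconv {a σ : ℝ} (ha : 0 < a) (hσ : 0 < σ) :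
    ConvexOn ℝ Set.univ (fun u : ℝ => Real.log (Δ a σ u) + u ^ 2 / (2 * σ ^ 2)) := by
  have key : ∀ u : ℝ, Real.log (Δ a σ u) + u ^ 2 / (2 * σ ^ 2)
      = Real.log ((σ * Real.sqrt (2 * Real.pi))⁻¹) + Real.log (Mfun a σ (u / σ ^ 2)) := by
    intro u
    rw [Δ_eq hσ u, Real.log_mul (by positivity) (Mpos ha _).ne',
      Real.log_mul (by positivity) (Real.exp_pos _).ne', Real.log_exp]
    ring
  refine convexOn_iff_forall_pos.mpr ⟨convex_univ, fun u _ v _ c d hc hd hcd => ?_⟩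
  simp only [smul_eq_mul]
  rw [key, key, key]
  have harg : (c * u + d * v) / σ ^ 2 = c * (u / σ ^ 2) + d * (v / σ ^ 2) := by ring
  rw [harg]
  have hH := Mholder ha hσ (t₁ := u / σ ^ 2) (t₂ := v / σ ^ 2) hc hd hcd
  have hlog : Real.log (Mfun a σ (c * (u / σ ^ 2) + d * (v / σ ^ 2)))
      ≤ c * Real.log (Mfun a σ (u / σ ^ 2)) + d * Real.log (Mfun a σ (v / σ ^ 2)) := by
    calc Real.log (Mfun a σ (c * (u / σ ^ 2) + d * (v / σ ^ 2)))
        ≤ Real.log (Mfun a σ (u / σ ^ 2) ^ c * Mfun a σ (v / σ ^ 2) ^ d) :=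
          Real.log_le_log (Mpos ha _) hH
      _ = c * Real.log (Mfun a σ (u / σ ^ 2)) + d * Real.log (Mfun a σ (v / σ ^ 2)) := by
          have h1 := Mpos (σ := σ) ha (u / σ ^ 2)
          have h2 := Mpos (σ := σ) ha (v / σ ^ 2)
          rw [Real.log_mul (by positivity) (by positivity),
            Real.log_rpow h1, Real.log_rpow h2]
  have hC : c * Real.log ((σ * Real.sqrt (2 * Real.pi))⁻¹) + d * Real.log ((σ * Real.sqrt (2 * Real.pi))⁻¹)
      = Real.log ((σ * Real.sqrt (2 * Real.pi))⁻¹) := by rw [← add_mul, hcd, one_mul]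
  linarith


/-- The Rényi divergence of order `α` between the truncated Gaussians
`N^T(θ, σ², [−a,a])` and `N^T(θ+x, σ², [−a,a])` is increasing in `x ≥ 0`. -/
theorem truncated_gaussian_renyi_monotone (α σ a θ : ℝ)
    (hα : 1 < α) (hσ : 0 < σ) (ha : 0 < a) :
    MonotoneOn (fun x : ℝ =>
      α * x ^ 2 / (2 * σ ^ 2) + Real.log (Δ a σ (θ + x) / Δ a σ θ) +
        (1 / (α - 1)) * Real.log (Δ a σ (θ + (1 - α) * x) / Δ a σ θ))
      (Set.Ici 0) := by
  set h : ℝ → ℝ := fun u => Real.log (Δ a σ u) + u ^ 2 / (2 * σ ^ 2) with hh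
  have hcv := hconv (a := a) (σ := σ) ha hσ
  have hΔpos : ∀ u, 0 < Δ a σ u := fun u => Δpos ha hσ u
  have hα1 : (0:ℝ) < α - 1 := by linarith
  have Feq : ∀ z : ℝ, α * z ^ 2 / (2 * σ ^ 2) + Real.log (Δ a σ (θ + z) / Δ a σ θ) +
        (1 / (α - 1)) * Real.log (Δ a σ (θ + (1 - α) * z) / Δ a σ θ)
      = h (θ + z) + (1 / (α - 1)) * h (θ + (1 - α) * z)
        - θ ^ 2 * α / ((α - 1) * (2 * σ ^ 2)) - (1 + 1 / (α - 1)) * Real.log (Δ a σ θ) := by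
    intro z
    rw [Real.log_div (hΔpos _).ne' (hΔpos θ).ne', Real.log_div (hΔpos _).ne' (hΔpos θ).ne']
    rw [hh]; dsimp only
    field_simp
    ring
  intro x hx y hy hxy
  simp only [Set.mem_Ici] at hx hy
  rcases eq_or_lt_of_le hxy with rfl | hxy'
  · exact le_refl _
  have hy0 : 0 < y := lt_of_le_of_lt hx hxy'
  dsimp only
  rw [Feq x, Feq y]
  have hpq : θ + (1 - α) * y < θ + (1 - α) * x := by nlinarith
  have hqr : θ + (1 - α) * x ≤ θ + x := by nlinarith
  have hrs : θ + x < θ + y := by linarith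
  set p := θ + (1 - α) * y with hp
  set q := θ + (1 - α) * x with hq
  set r := θ + x with hr
  set s := θ + y with hs
  have hps : p < s := lt_of_lt_of_le hpq (hqr.trans hrs.le)
  have hqs : q < s := lt_of_le_of_lt hqr hrs
  have hpr : p < r := lt_of_lt_of_le hpq hqr
  have sec1 : (h q - h p) / (q - p) ≤ (h s - h p) / (s - p) :=
    hcv.secant_mono (Set.mem_univ p) (Set.mem_univ q) (Set.mem_univ s)
      hpq.ne' hps.ne' hqs.le
  have sec2 : (h p - h s) / (p - s) ≤ (h r - h s) / (r - s) :=
    hcv.secant_mono (Set.mem_univ s) (Set.mem_univ p) (Set.mem_univ r)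
      hps.ne hrs.ne hpr.le
  have e1 : (h p - h s) / (p - s) = (h s - h p) / (s - p) := by
    rw [← neg_div_neg_eq]; ring_nf
  have e2 : (h r - h s) / (r - s) = (h s - h r) / (s - r) := by
    rw [← neg_div_neg_eq]; ring_nf
  rw [e1, e2] at sec2
  have key : (h q - h p) / (q - p) ≤ (h s - h r) / (s - r) := le_trans sec1 sec2
  have hqp : q - p = (α - 1) * (y - x) := by rw [hq, hp]; ring
  have hsr : s - r = y - x := by rw [hs, hr]; ring
  have hm : (0:ℝ) < y - x := by linarith
  rw [hqp, hsr, div_le_div_iff₀ (by positivity) hm] at key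
  have final : (1 / (α - 1)) * (h q - h p) ≤ h s - h r := by
    rw [one_div, inv_mul_le_iff₀ hα1]
    nlinarith [key, hm]
  linarith [final]
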